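/- Let X and Y be measurable spaces with countably generated σ-algebras, and let J be a probability measure on X × Y whose marginals P_X = J.map(fst) and P_Y = J.map(snd) are perfect. Then there exist Markov kernels f from Y to X × Y and g from X to X × Y such that P_Y.bind(f) = J, P_X.bind(g) = J, for all measurable A ⊆ X and B, C ⊆ Y one has ∫_C f(y)(A × B) dP_Y(y) = J(A × (B ∩ C)), for all measurable A, A' ⊆ X and B ⊆ Y one has ∫_{A'} g(x)(A × B) dP_X(x) = J((A ∩ A') × B), and consequently ∫_A g(x)(X × B) dP_X(x) = J(A × B) = ∫_B f(y)(A × Y) dP_Y(y) for all measurable A ⊆ X and B ⊆ Y. -/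

import Mathlib

open MeasureTheory ProbabilityTheory

/-- A measure `μ` on a measurable space `Z` is *perfect* if for every measurable
function `h : Z → ℝ` there exists a Borel set `E ⊆ range h` with
`μ (h ⁻¹' E) = μ univ`. -/
def IsPerfect {Z : Type*} [MeasurableSpace Z] (μ : Measure Z) : Prop :=
  ∀ h : Z → ℝ, Measurable h →
    ∃ E : Set ℝ, MeasurableSet E ∧ E ⊆ Set.range h ∧ μ (h ⁻¹' E) = μ Set.univ

open MeasurableSpace Set in
/-- A countably generated measurable space admits a real-valued measurable function
generating the σ-algebra. -/
lemma exists_generating_real (β : Type*) [m : MeasurableSpace β] [CountablyGenerated β] :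
    ∃ h : β → ℝ, Measurable h ∧ ∀ A : Set β, MeasurableSet A →
      ∃ T : Set ℝ, MeasurableSet T ∧ A = h ⁻¹' T := by
  obtain ⟨e, he⟩ := MeasureTheory.exists_measurableEmbedding_real (ℕ → Bool)
  refine ⟨e ∘ mapNatBool β, he.measurable.comp (measurable_mapNatBool β), ?_⟩
  have hle : m ≤ MeasurableSpace.comap (e ∘ mapNatBool β) inferInstance := by
    conv_lhs => rw [← generateFrom_natGeneratingSequence β]
    refine generateFrom_le ?_
    rintro - ⟨n, rfl⟩
    refine ⟨e '' {y | y n}, ?_, ?_⟩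
    · have hmeas : Measurable fun (y : ℕ → Bool) => y n := measurable_pi_apply n
      exact he.measurableSet_image' (hmeas (measurableSet_singleton true))
    · ext x
      simp [he.injective.mem_set_image, mapNatBool]
  intro A hA
  obtain ⟨T, hT, hTA⟩ := hle A hA
  exact ⟨T, hT, hTA.symm⟩

open MeasurableSpace Set in
/-- Disintegration of a probability measure on a product of a measurable space and a
countably generated space whose second marginal is perfect. -/
lemma exists_disintegration {α β : Type*} [MeasurableSpace α] [MeasurableSpace β]
    [CountablyGenerated β] (μ : Measure (α × β)) [IsProbabilityMeasure μ]
    (hperf : IsPerfect (μ.map Prod.snd)) :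
    ∃ κ : Kernel α β, IsMarkovKernel κ ∧
      ∀ A B, MeasurableSet A → MeasurableSet B →
        ∫⁻ a in A, κ a B ∂(μ.map Prod.fst) = μ (A ×ˢ B) := by
  classical
  have hne : Nonempty (α × β) := by
    by_contra hcon
    rw [not_nonempty_iff] at hcon
    have h1 : μ Set.univ = 1 := measure_univ
    rw [Set.univ_eq_empty_iff.mpr hcon] at h1
    simp at h1
  have hneβ : Nonempty β := ⟨hne.some.2⟩
  obtain ⟨h, hm, hgen⟩ := exists_generating_real β
  obtain ⟨E, hE, hErange, hEfull⟩ := hperf h hm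
  -- pushforward to α × ℝ
  have hmap : Measurable (Prod.map (id : α → α) h) := measurable_id.prodMap hm
  set ρ : Measure (α × ℝ) := μ.map (Prod.map id h) with hρ
  have : IsProbabilityMeasure ρ := Measure.isProbabilityMeasure_map hmap.aemeasurable
  have hρfst : ρ.fst = μ.map Prod.fst := by
    rw [hρ, Measure.fst, Measure.map_map measurable_fst hmap]
    rfl
  -- section of h on E
  set x0 : β := Classical.arbitrary β with hx0
  set s : ℝ → β := fun r => if hr : r ∈ E then (hErange hr).choose else x0 with hs
  have hs_spec : ∀ r ∈ E, h (s r) = r := by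
    intro r hr
    simp only [hs, dif_pos hr]
    exact (hErange hr).choose_spec
  have hs_meas : Measurable s := by
    intro A hA
    obtain ⟨T, hT, rfl⟩ := hgen A hA
    have : s ⁻¹' (h ⁻¹' T) = (E ∩ T) ∪ (Eᶜ ∩ {r : ℝ | h x0 ∈ T}) := by
      ext r
      by_cases hr : r ∈ E
      · simp only [Set.mem_preimage, Set.mem_union, Set.mem_inter_iff, Set.mem_compl_iff,
          Set.mem_setOf_eq, hr, not_true_eq_false, false_and, or_false, true_and]
        rw [show h (s r) ∈ T ↔ r ∈ T from by rw [hs_spec r hr]]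
      · simp only [Set.mem_preimage, Set.mem_union, Set.mem_inter_iff, Set.mem_compl_iff,
          Set.mem_setOf_eq, hr, false_and, not_false_eq_true, true_and, false_or]
        rw [show s r = x0 from by simp [hs, dif_neg hr]]
    rw [this]
    refine (hE.inter hT).union (hE.compl.inter ?_)
    by_cases hc : h x0 ∈ T
    · simp [hc]
    · simp [hc]
  -- the kernel
  refine ⟨Kernel.map ρ.condKernel s, Kernel.IsMarkovKernel.map _ hs_meas, ?_⟩
  -- a.e. concentration on E
  have hcompl : ρ.fst ⊗ₘ ρ.condKernel = ρ := ρ.disintegrate _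
  have hnull : ∀ᵐ a ∂ρ.fst, ρ.condKernel a Eᶜ = 0 := by
    have hzero : ∫⁻ a, ρ.condKernel a Eᶜ ∂ρ.fst = 0 := by
      have h1 : ∫⁻ a, ρ.condKernel a Eᶜ ∂ρ.fst = (ρ.fst ⊗ₘ ρ.condKernel) (Set.univ ×ˢ Eᶜ) := by
        rw [Measure.compProd_apply_prod MeasurableSet.univ hE.compl, setLIntegral_univ]
      rw [h1, hcompl, hρ, Measure.map_apply hmap (MeasurableSet.univ.prod hE.compl),
        Set.preimage_prod_map_prod]
      have hpre : (h ⁻¹' Eᶜ) = (h ⁻¹' E)ᶜ := rfl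
      have hsnd : μ (Set.univ ×ˢ (h ⁻¹' Eᶜ)) = (μ.map Prod.snd) ((h ⁻¹' E)ᶜ) := by
        rw [Measure.map_apply measurable_snd ((hm hE).compl), hpre]
        congr 1
        ext p
        simp
      rw [Set.preimage_id, hsnd]
      have : IsProbabilityMeasure (μ.map Prod.snd) :=
        Measure.isProbabilityMeasure_map measurable_snd.aemeasurable
      rw [measure_compl (hm hE) (measure_ne_top _ _), hEfull]
      simp
    have := (lintegral_eq_zero_iff (Kernel.measurable_coe _ hE.compl)).mp hzero
    filter_upwards [this] with a ha using ha
  intro A B hA hB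
  obtain ⟨T, hT, rfl⟩ := hgen B hB
  have key : ∀ᵐ a ∂ρ.fst, (Kernel.map ρ.condKernel s) a (h ⁻¹' T) = ρ.condKernel a T := by
    filter_upwards [hnull] with a ha
    rw [Kernel.map_apply _ hs_meas, Measure.map_apply hs_meas (hm hT)]
    have hinter : s ⁻¹' (h ⁻¹' T) ∩ E = T ∩ E := by
      ext r
      simp only [Set.mem_inter_iff, Set.mem_preimage, and_congr_left_iff]
      intro hr
      rw [hs_spec r hr]
    have haux : ∀ S : Set ℝ, ρ.condKernel a S = ρ.condKernel a (S ∩ E) := by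
      intro S
      rw [← measure_inter_add_diff S hE]
      have : ρ.condKernel a (S \ E) = 0 :=
        measure_mono_null (fun r hr => hr.2) ha
      rw [this, add_zero]
    rw [haux (s ⁻¹' (h ⁻¹' T)), hinter, ← haux T]
  calc ∫⁻ a in A, (Kernel.map ρ.condKernel s) a (h ⁻¹' T) ∂(μ.map Prod.fst)
      = ∫⁻ a in A, ρ.condKernel a T ∂ρ.fst := by
        rw [← hρfst]
        exact lintegral_congr_ae (ae_restrict_of_ae key)
    _ = (ρ.fst ⊗ₘ ρ.condKernel) (A ×ˢ T) := (Measure.compProd_apply_prod hA hT).symm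
    _ = ρ (A ×ˢ T) := by rw [hcompl]
    _ = μ (A ×ˢ (h ⁻¹' T)) := by
        rw [hρ, Measure.map_apply hmap (hA.prod hT), Set.preimage_prod_map_prod,
          Set.preimage_id]

theorem stmt_12 {X Y : Type*} [MeasurableSpace X] [MeasurableSpace Y]
    [MeasurableSpace.CountablyGenerated X] [MeasurableSpace.CountablyGenerated Y]
    (J : Measure (X × Y)) [IsProbabilityMeasure J]
    (hPX : IsPerfect (J.map Prod.fst)) (hPY : IsPerfect (J.map Prod.snd)) :
    ∃ (f : Kernel Y (X × Y)) (g : Kernel X (X × Y)),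
      IsMarkovKernel f ∧ IsMarkovKernel g ∧
      (J.map Prod.snd).bind (fun y => f y) = J ∧
      (J.map Prod.fst).bind (fun x => g x) = J ∧
      (∀ (A : Set X) (B C : Set Y), MeasurableSet A → MeasurableSet B → MeasurableSet C →
        ∫⁻ y in C, f y (A ×ˢ B) ∂(J.map Prod.snd) = J (A ×ˢ (B ∩ C))) ∧
      (∀ (A A' : Set X) (B : Set Y), MeasurableSet A → MeasurableSet A' → MeasurableSet B →
        ∫⁻ x in A', g x (A ×ˢ B) ∂(J.map Prod.fst) = J ((A ∩ A') ×ˢ B)) ∧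
      (∀ (A : Set X) (B : Set Y), MeasurableSet A → MeasurableSet B →
        ∫⁻ x in A, g x (Set.univ ×ˢ B) ∂(J.map Prod.fst) = J (A ×ˢ B) ∧
        J (A ×ˢ B) = ∫⁻ y in B, f y (A ×ˢ Set.univ) ∂(J.map Prod.snd)) := by
  classical
  -- the swapped measure
  set μf : Measure (Y × X) := J.map Prod.swap with hμf
  have : IsProbabilityMeasure μf := Measure.isProbabilityMeasure_map measurable_swap.aemeasurable
  have hswap_snd : μf.map Prod.snd = J.map Prod.fst := by
    rw [hμf, Measure.map_map measurable_snd measurable_swap]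
    rfl
  have hswap_fst : μf.map Prod.fst = J.map Prod.snd := by
    rw [hμf, Measure.map_map measurable_fst measurable_swap]
    rfl
  obtain ⟨κf, hκfM, hκf⟩ := exists_disintegration μf (hswap_snd ▸ hPX)
  obtain ⟨κg, hκgM, hκg⟩ := exists_disintegration J hPY
  -- the key integral identities for κf and κg
  have keyf : ∀ (A : Set X) (B : Set Y), MeasurableSet A → MeasurableSet B →
      ∫⁻ y in B, κf y A ∂(J.map Prod.snd) = J (A ×ˢ B) := by
    intro A B hA hB
    rw [← hswap_fst, hκf B A hB hA, hμf,
      Measure.map_apply measurable_swap (hB.prod hA), Set.preimage_swap_prod]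
  have keyg : ∀ (A : Set X) (B : Set Y), MeasurableSet A → MeasurableSet B →
      ∫⁻ x in A, κg x B ∂(J.map Prod.fst) = J (A ×ˢ B) := fun A B hA hB => hκg A B hA hB
  -- rectangle evaluations
  have hf_rect : ∀ (A : Set X) (B C : Set Y), MeasurableSet A → MeasurableSet B →
      MeasurableSet C →
      ∫⁻ y in C, (κf ×ₖ Kernel.id) y (A ×ˢ B) ∂(J.map Prod.snd) = J (A ×ˢ (B ∩ C)) := by
    intro A B C hA hB hC
    have heval : ∀ y, (κf ×ₖ Kernel.id) y (A ×ˢ B) = B.indicator (fun y' => κf y' A) y := by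
      intro y
      rw [Kernel.prod_apply, Measure.prod_prod, Kernel.id_apply, Measure.dirac_apply' y hB]
      by_cases hy : y ∈ B <;> simp [Set.indicator, hy]
    simp_rw [heval]
    rw [setLIntegral_indicator hB]
    exact keyf A (B ∩ C) hA (hB.inter hC)
  have hg_rect : ∀ (A A' : Set X) (B : Set Y), MeasurableSet A → MeasurableSet A' →
      MeasurableSet B →
      ∫⁻ x in A', (Kernel.id ×ₖ κg) x (A ×ˢ B) ∂(J.map Prod.fst) = J ((A ∩ A') ×ˢ B) := by
    intro A A' B hA hA' hB
    have heval : ∀ x, (Kernel.id ×ₖ κg) x (A ×ˢ B) = A.indicator (fun x' => κg x' B) x := by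
      intro x
      rw [Kernel.prod_apply, Measure.prod_prod, Kernel.id_apply, Measure.dirac_apply' x hA]
      by_cases hx : x ∈ A <;> simp [Set.indicator, hx]
    simp_rw [heval]
    rw [setLIntegral_indicator hA]
    exact keyg (A ∩ A') B (hA.inter hA') hB
  -- the bind identities
  have hPsnd : IsProbabilityMeasure (J.map Prod.snd) :=
    Measure.isProbabilityMeasure_map measurable_snd.aemeasurable
  have hPfst : IsProbabilityMeasure (J.map Prod.fst) :=
    Measure.isProbabilityMeasure_map measurable_fst.aemeasurable
  have hbindf : (J.map Prod.snd).bind (fun y => (κf ×ₖ Kernel.id) y) = J := by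
    have hfin : IsProbabilityMeasure ((J.map Prod.snd).bind (fun y => (κf ×ₖ Kernel.id) y)) := by
      constructor
      rw [Measure.bind_apply MeasurableSet.univ (Kernel.measurable _).aemeasurable]
      simp [measure_univ]
    refine MeasureTheory.ext_of_generate_finite _ generateFrom_prod.symm
      isPiSystem_prod ?_ ?_
    · rintro - ⟨A, hA, B, hB, rfl⟩
      rw [Measure.bind_apply (hA.prod hB) (Kernel.measurable _).aemeasurable,
        ← setLIntegral_univ]
      rw [hf_rect A B Set.univ hA hB MeasurableSet.univ, Set.inter_univ]
    · rw [Measure.bind_apply MeasurableSet.univ (Kernel.measurable _).aemeasurable]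
      simp [measure_univ]
  have hbindg : (J.map Prod.fst).bind (fun x => (Kernel.id ×ₖ κg) x) = J := by
    have hfin : IsProbabilityMeasure ((J.map Prod.fst).bind (fun x => (Kernel.id ×ₖ κg) x)) := by
      constructor
      rw [Measure.bind_apply MeasurableSet.univ (Kernel.measurable _).aemeasurable]
      simp [measure_univ]
    refine MeasureTheory.ext_of_generate_finite _ generateFrom_prod.symm
      isPiSystem_prod ?_ ?_
    · rintro - ⟨A, hA, B, hB, rfl⟩
      rw [Measure.bind_apply (hA.prod hB) (Kernel.measurable _).aemeasurable,
        ← setLIntegral_univ]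
      rw [hg_rect A Set.univ B hA MeasurableSet.univ hB, Set.inter_univ]
    · rw [Measure.bind_apply MeasurableSet.univ (Kernel.measurable _).aemeasurable]
      simp [measure_univ]
  refine ⟨κf ×ₖ Kernel.id, Kernel.id ×ₖ κg, inferInstance, inferInstance, hbindf, hbindg,
    hf_rect, hg_rect, ?_⟩
  intro A B hA hB
  constructor
  · have := hg_rect Set.univ A B MeasurableSet.univ hA hB
    rwa [Set.univ_inter] at this
  · have := hf_rect A Set.univ B hA MeasurableSet.univ hB
    rw [Set.univ_inter] at this
    exact this.symm
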